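/- Let ι be a nonempty finite index set, let q : ι → ℝ satisfy q i ≥ 0 for all i and Σ_{i∈ι} q i = 1, and let b : ι → ℝ satisfy α ≤ b i ≤ β for all i, where α ≤ β are real numbers. Define p : ι → ℝ by p i := q i · exp(b i) / Σ_{j∈ι} q j · exp(b j). Then Σ_{i∈ι} |p i − q i| ≤ e^{β−α} − 1. -/

import Mathlib

open Finset

/-- Key ℓ¹-estimate for exponential reweighting: if `q` is a probability vector and
`α ≤ b i ≤ β` for all `i`, then the exponentially reweighted vector
`p i = q i·exp(b i) / ∑_j q j·exp(b j)` satisfies `∑_i |p i - q i| ≤ e^{β-α} - 1`. -/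
theorem exp_reweight_l1_dist_le
    {ι : Type*} [Fintype ι] [Nonempty ι]
    (q b : ι → ℝ) (hq : ∀ i, 0 ≤ q i) (hqsum : ∑ i, q i = 1)
    (α β : ℝ) (hαβ : α ≤ β) (hb : ∀ i, b i ∈ Set.Icc α β) :
    ∑ i, |q i * Real.exp (b i) / (∑ j, q j * Real.exp (b j)) - q i|
      ≤ Real.exp (β - α) - 1 := by
  set S := ∑ j, q j * Real.exp (b j) with hS
  have hSlb : Real.exp α ≤ S := by
    calc Real.exp α = ∑ j, q j * Real.exp α := by
          rw [← Finset.sum_mul, hqsum, one_mul]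
      _ ≤ S := Finset.sum_le_sum fun j _ =>
          mul_le_mul_of_nonneg_left (Real.exp_le_exp.2 (hb j).1) (hq j)
  have hSub : S ≤ Real.exp β := by
    calc S ≤ ∑ j, q j * Real.exp β := Finset.sum_le_sum fun j _ =>
          mul_le_mul_of_nonneg_left (Real.exp_le_exp.2 (hb j).2) (hq j)
      _ = Real.exp β := by rw [← Finset.sum_mul, hqsum, one_mul]
  have hSpos : 0 < S := lt_of_lt_of_le (Real.exp_pos α) hSlb
  have key : ∀ i, |q i * Real.exp (b i) / S - q i|
      ≤ q i * (Real.exp β - Real.exp α) / S := by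
    intro i
    have h1 : q i * Real.exp (b i) / S - q i = q i * (Real.exp (b i) - S) / S := by
      field_simp
    rw [h1, abs_div, abs_of_pos hSpos, abs_mul, abs_of_nonneg (hq i)]
    gcongr
    · exact hq i
    rw [abs_le]
    constructor
    · have := Real.exp_le_exp.2 (hb i).1
      linarith
    · have := Real.exp_le_exp.2 (hb i).2
      linarith
  calc ∑ i, |q i * Real.exp (b i) / S - q i|
      ≤ ∑ i, q i * (Real.exp β - Real.exp α) / S :=
        Finset.sum_le_sum fun i _ => key i
    _ = (Real.exp β - Real.exp α) / S := by
        rw [← Finset.sum_div, ← Finset.sum_mul, hqsum, one_mul]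
    _ ≤ (Real.exp β - Real.exp α) / Real.exp α := by
        have hnn : 0 ≤ Real.exp β - Real.exp α := by
          have := Real.exp_le_exp.2 hαβ; linarith
        gcongr
    _ = Real.exp (β - α) - 1 := by
        rw [sub_div, ← Real.exp_sub, div_self (Real.exp_ne_zero α)]
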